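/- Every connected simple graph Γ on a finite vertex set is slide-equivalent to an almost regular graph: there exists a finite sequence of edge slides transforming Γ into a graph Γ̃ on the same vertex set such that |d(x) − d(y)| ≤ 1 for all vertices x, y of Γ̃. -/

import Mathlib

open SimpleGraph Finset

/-- An edge slide: given distinct vertices `x, y, z` with `x ~ y`, `y ~ z` and `x ≁ z`,
slide the edge `xy` to `xz`. -/
def EdgeSlide {V : Type*} (G G' : SimpleGraph V) : Prop :=
  ∃ x y z : V, x ≠ z ∧ G.Adj x y ∧ G.Adj y z ∧ ¬ G.Adj x z ∧
    G' = G.deleteEdges {s(x, y)} ⊔ SimpleGraph.fromEdgeSet {s(x, z)}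

private noncomputable def dg {V : Type*} (G : SimpleGraph V) (v : V) : ℕ :=
  (G.neighborSet v).ncard

private noncomputable def Phi {V : Type*} [Fintype V] (G : SimpleGraph V) : ℕ :=
  ∑ v : V, (dg G v) ^ 2

private noncomputable def Kd {V : Type*} (G : SimpleGraph V) : ℕ :=
  sInf {n | ∃ a b : V, dg G b + 2 ≤ dg G a ∧ G.dist a b = n}

section Main

variable {V : Type*} [Fintype V]

private lemma slide_main {G : SimpleGraph V} (hc : G.Connected) {y z : V}
    (hyz : G.Adj y z) (hd : dg G z < dg G y) :
    ∃ G' : SimpleGraph V, EdgeSlide G G' ∧ G'.Connected ∧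
      dg G' y + 1 = dg G y ∧ dg G' z = dg G z + 1 ∧
      (∀ v, v ≠ y → v ≠ z → dg G' v = dg G v) ∧
      (∀ u v, G.Adj u v → u ≠ y → v ≠ y → G'.Adj u v) := by
  classical
  -- find the vertex x to slide
  obtain ⟨x, hxy, hxz, hxzne⟩ : ∃ x, G.Adj y x ∧ ¬ G.Adj z x ∧ x ≠ z := by
    by_contra hcon
    push_neg at hcon
    have hsub : G.neighborSet y \ {z} ⊆ G.neighborSet z \ {y} := by
      rintro w ⟨hw, hwz⟩
      simp only [Set.mem_singleton_iff] at hwz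
      have hadjzw : G.Adj z w := by
        by_contra hzw
        exact hwz (hcon w hw hzw)
      exact ⟨hadjzw, by simp only [Set.mem_singleton_iff]; exact fun hh => G.irrefl (hh ▸ hw)⟩
    have hle := Set.ncard_le_ncard hsub (Set.toFinite _)
    have h1 : (G.neighborSet y \ {z}).ncard + 1 = (G.neighborSet y).ncard :=
      Set.ncard_diff_singleton_add_one hyz (Set.toFinite _)
    have h2 : (G.neighborSet z \ {y}).ncard + 1 = (G.neighborSet z).ncard :=
      Set.ncard_diff_singleton_add_one hyz.symm (Set.toFinite _)
    unfold dg at hd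
    omega
  have hxy' : G.Adj x y := hxy.symm
  have hxz' : ¬ G.Adj x z := fun h' => hxz h'.symm
  have hxney : x ≠ y := fun hh => G.irrefl (hh ▸ hxy')
  have hynez : y ≠ z := hyz.ne
  set G' := G.deleteEdges {s(x, y)} ⊔ SimpleGraph.fromEdgeSet {s(x, z)} with hG'
  have hadj : ∀ u v : V, G'.Adj u v ↔
      (G.Adj u v ∧ ¬ s(u, v) = s(x, y)) ∨ (s(u, v) = s(x, z) ∧ u ≠ v) := by
    intro u v
    rw [hG']
    simp [sup_adj, deleteEdges_adj, fromEdgeSet_adj, Set.mem_singleton_iff]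
  -- neighbor sets
  have hNy : G'.neighborSet y = G.neighborSet y \ {x} := by
    ext w
    simp only [mem_neighborSet, hadj, Sym2.eq_iff, Set.mem_diff, Set.mem_singleton_iff]
    constructor
    · rintro (⟨h1, h2⟩ | ⟨h1, h2⟩)
      · exact ⟨h1, fun hw => h2 (Or.inr ⟨trivial, hw⟩)⟩
      · rcases h1 with ⟨hh1, hh2⟩ | ⟨hh1, hh2⟩
        · exact absurd hh1.symm hxney
        · exact absurd hh1 hynez
    · rintro ⟨h1, h2⟩
      refine Or.inl ⟨h1, ?_⟩
      rintro (⟨hh1, hh2⟩ | ⟨hh1, hh2⟩)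
      · exact hxney hh1.symm
      · exact h2 hh2
  have hNz : G'.neighborSet z = insert x (G.neighborSet z) := by
    ext w
    simp only [mem_neighborSet, hadj, Sym2.eq_iff, Set.mem_insert_iff]
    constructor
    · rintro (⟨h1, h2⟩ | ⟨h1, h3⟩)
      · exact Or.inr h1
      · rcases h1 with ⟨hh1, hh2⟩ | ⟨hh1, hh2⟩
        · exact absurd hh1.symm hxzne
        · exact Or.inl hh2
    · rintro (rfl | h1)
      · exact Or.inr ⟨Or.inr ⟨trivial, rfl⟩, fun hh => hxzne hh.symm⟩
      · refine Or.inl ⟨h1, ?_⟩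
        rintro (⟨hh1, hh2⟩ | ⟨hh1, hh2⟩)
        · exact hxzne hh1.symm
        · exact hynez hh1.symm
  have hNx : G'.neighborSet x = insert z (G.neighborSet x \ {y}) := by
    ext w
    simp only [mem_neighborSet, hadj, Sym2.eq_iff, Set.mem_insert_iff, Set.mem_diff,
      Set.mem_singleton_iff]
    constructor
    · rintro (⟨h1, h2⟩ | ⟨h1, h3⟩)
      · exact Or.inr ⟨h1, fun hw => h2 (Or.inl ⟨trivial, hw⟩)⟩
      · rcases h1 with ⟨hh1, hh2⟩ | ⟨hh1, hh2⟩
        · exact Or.inl hh2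
        · exact absurd hh1 hxzne
    · rintro (rfl | ⟨h1, h2⟩)
      · exact Or.inr ⟨Or.inl ⟨trivial, rfl⟩, fun hh => hxzne hh⟩
      · refine Or.inl ⟨h1, ?_⟩
        rintro (⟨hh1, hh2⟩ | ⟨hh1, hh2⟩)
        · exact h2 hh2
        · exact hxney hh1
  have hNo : ∀ v, v ≠ x → v ≠ y → v ≠ z → G'.neighborSet v = G.neighborSet v := by
    intro v hvx hvy hvz
    ext w
    simp only [mem_neighborSet, hadj, Sym2.eq_iff]
    constructor
    · rintro (⟨h1, h2⟩ | ⟨h1, h3⟩)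
      · exact h1
      · rcases h1 with ⟨hh1, hh2⟩ | ⟨hh1, hh2⟩
        · exact absurd hh1 hvx
        · exact absurd hh1 hvz
    · intro h1
      refine Or.inl ⟨h1, ?_⟩
      rintro (⟨hh1, hh2⟩ | ⟨hh1, hh2⟩)
      · exact hvx hh1
      · exact hvy hh1
  -- the six conclusions
  refine ⟨G', ⟨x, y, z, hxzne, hxy', hyz, hxz', hG'⟩, ?_, ?_, ?_, ?_, ?_⟩
  · -- connectivity
    have hstep : ∀ u v : V, G.Adj u v → G'.Reachable u v := by
      intro u v huv
      by_cases he : s(u, v) = s(x, y)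
      · have hxz2 : G'.Adj x z := (hadj x z).mpr (Or.inr ⟨rfl, hxzne⟩)
        have hzy2 : G'.Adj z y := by
          refine (hadj z y).mpr (Or.inl ⟨hyz.symm, ?_⟩)
          rw [Sym2.eq_iff]
          rintro (⟨hh1, hh2⟩ | ⟨hh1, hh2⟩)
          · exact hxzne hh1.symm
          · exact hynez hh1.symm
        have hxy2 : G'.Reachable x y := hxz2.reachable.trans hzy2.reachable
        rw [Sym2.eq_iff] at he
        rcases he with ⟨rfl, rfl⟩ | ⟨rfl, rfl⟩
        · exact hxy2
        · exact hxy2.symm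
      · exact ((hadj u v).mpr (Or.inl ⟨huv, he⟩)).reachable
    have hpre : G'.Preconnected := by
      intro u v
      obtain ⟨w⟩ := hc.preconnected u v
      induction w with
      | nil => exact Reachable.refl _
      | cons h p ih => exact (hstep _ _ h).trans ih
    haveI : Nonempty V := hc.nonempty
    exact ⟨hpre⟩
  · unfold dg
    rw [hNy]
    exact Set.ncard_diff_singleton_add_one hxy (Set.toFinite _)
  · unfold dg
    rw [hNz]
    exact Set.ncard_insert_of_notMem hxz (Set.toFinite _)
  · intro v hvy hvz
    by_cases hvx : v = x
    · subst hvx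
      unfold dg
      rw [hNx]
      have h1 : (insert z (G.neighborSet v \ {y})).ncard = (G.neighborSet v \ {y}).ncard + 1 :=
        Set.ncard_insert_of_notMem (fun hh => hxz' hh.1) (Set.toFinite _)
      have h2 : (G.neighborSet v \ {y}).ncard + 1 = (G.neighborSet v).ncard :=
        Set.ncard_diff_singleton_add_one hxy' (Set.toFinite _)
      omega
    · unfold dg
      rw [hNo v hvx hvy hvz]
  · intro u v huv hu hv
    refine (hadj u v).mpr (Or.inl ⟨huv, ?_⟩)
    rw [Sym2.eq_iff]
    rintro (⟨hh1, hh2⟩ | ⟨hh1, hh2⟩)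
    · exact hv hh2
    · exact hu hh1

private lemma phi_eq {G G' : SimpleGraph V} {y z : V} (hne : y ≠ z)
    (h5 : ∀ v, v ≠ y → v ≠ z → dg G' v = dg G v) :
    Phi G' + (dg G y) ^ 2 + (dg G z) ^ 2 = Phi G + (dg G' y) ^ 2 + (dg G' z) ^ 2 := by
  classical
  unfold Phi
  have hz : z ∈ (univ : Finset V).erase y := by
    simp [Ne.symm, hne.symm]
  rw [← Finset.add_sum_erase _ (fun v => dg G' v ^ 2) (mem_univ y),
      ← Finset.add_sum_erase _ (fun v => dg G v ^ 2) (mem_univ y),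
      ← Finset.add_sum_erase _ (fun v => dg G' v ^ 2) hz,
      ← Finset.add_sum_erase _ (fun v => dg G v ^ 2) hz]
  have hsum : ∑ v ∈ (((univ : Finset V).erase y).erase z), dg G' v ^ 2
      = ∑ v ∈ (((univ : Finset V).erase y).erase z), dg G v ^ 2 := by
    refine Finset.sum_congr rfl (fun v hv => ?_)
    have hvz : v ≠ z := Finset.ne_of_mem_erase hv
    have hvy : v ≠ y := Finset.ne_of_mem_erase (Finset.mem_of_mem_erase hv)
    rw [h5 v hvy hvz]
  omega

private lemma phi_dec {G G' : SimpleGraph V} {y z : V} (hne : y ≠ z)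
    (h3 : dg G' y + 1 = dg G y) (h4 : dg G' z = dg G z + 1)
    (h5 : ∀ v, v ≠ y → v ≠ z → dg G' v = dg G v)
    (hyz2 : dg G z + 2 ≤ dg G y) : Phi G' + 2 ≤ Phi G := by
  have h := phi_eq hne h5
  rw [← h3, h4] at h
  rw [← h3] at hyz2
  have e1 : (dg G' y + 1) ^ 2 = dg G' y ^ 2 + 2 * dg G' y + 1 := by ring
  have e2 : (dg G z + 1) ^ 2 = dg G z ^ 2 + 2 * dg G z + 1 := by ring
  rw [e1, e2] at h
  omega

private lemma phi_swap {G G' : SimpleGraph V} {y z : V} (hne : y ≠ z)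
    (heq : dg G y = dg G z + 1)
    (h3 : dg G' y + 1 = dg G y) (h4 : dg G' z = dg G z + 1)
    (h5 : ∀ v, v ≠ y → v ≠ z → dg G' v = dg G v) : Phi G' = Phi G := by
  have h := phi_eq hne h5
  have e1 : dg G' y = dg G z := by omega
  have e2 : dg G' z = dg G y := by omega
  rw [e1, e2] at h
  omega

private lemma Kd_le {G : SimpleGraph V} (hc : G.Connected) : Kd G ≤ Fintype.card V := by
  unfold Kd
  rcases Set.eq_empty_or_nonempty {n | ∃ a b : V, dg G b + 2 ≤ dg G a ∧ G.dist a b = n}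
    with h | h
  · rw [h]
    simp [Nat.sInf_empty]
  · obtain ⟨a, b, _, hd⟩ := Nat.sInf_mem h
    obtain ⟨p, hp, hlen⟩ := hc.exists_path_of_dist a b
    have hlt := hp.length_lt
    omega

private lemma step_lemma {G : SimpleGraph V} (hc : G.Connected)
    (hbad : ∃ a b : V, dg G b + 2 ≤ dg G a) :
    ∃ G', EdgeSlide G G' ∧ G'.Connected ∧
      Phi G' * (Fintype.card V + 1) + Kd G' < Phi G * (Fintype.card V + 1) + Kd G := by
  obtain ⟨a0, b0, hab0⟩ := hbad
  have hSne : {n | ∃ a b : V, dg G b + 2 ≤ dg G a ∧ G.dist a b = n}.Nonempty :=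
    ⟨_, a0, b0, hab0, rfl⟩
  obtain ⟨a, b, hab, hdist⟩ := Nat.sInf_mem hSne
  have hdist : G.dist a b = Kd G := hdist
  have hne : a ≠ b := fun h => by rw [h] at hab; omega
  have hreach : G.Reachable a b := hc.preconnected a b
  obtain ⟨p, hp, hlen⟩ := hreach.exists_path_of_dist
  cases p with
  | nil => exact absurd rfl hne
  | @cons _ q1 _ h t =>
    rw [Walk.cons_isPath_iff] at hp
    have hdq : t.length + 1 = G.dist a b := by
      simpa using hlen
    by_cases hA : dg G q1 + 2 ≤ dg G a
    · -- Phi strictly decreases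
      have hdlt : dg G q1 < dg G a := by omega
      obtain ⟨G', hslide, hconn', h3, h4, h5, h6⟩ := slide_main hc h hdlt
      have hphi : Phi G' + 2 ≤ Phi G := phi_dec h.ne h3 h4 h5 hA
      have hK' := Kd_le hconn'
      have hmul := Nat.mul_le_mul_right (Fintype.card V + 1) hphi
      rw [add_mul] at hmul
      refine ⟨G', hslide, hconn', ?_⟩
      omega
    · -- swap case
      have hB : dg G a ≤ dg G q1 + 1 := by omega
      have hB2 : dg G q1 ≤ dg G b + 1 := by
        by_contra hq
        push_neg at hq
        have h1 : Kd G ≤ G.dist q1 b := Nat.sInf_le ⟨q1, b, by omega, rfl⟩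
        have h2 : G.dist q1 b ≤ t.length := SimpleGraph.dist_le t
        omega
      have hdlt : dg G q1 < dg G a := by omega
      obtain ⟨G', hslide, hconn', h3, h4, h5, h6⟩ := slide_main hc h hdlt
      have heq : dg G a = dg G q1 + 1 := by omega
      have hphi : Phi G' = Phi G := phi_swap h.ne heq h3 h4 h5
      have hbq : b ≠ q1 := fun hh => by rw [hh] at hab; omega
      have hba : b ≠ a := fun hh => by rw [hh] at hab; omega
      have hdb : dg G' b = dg G b := h5 b hba hbq
      have hpair : dg G' b + 2 ≤ dg G' q1 := by omega
      have hedges : ∀ e ∈ t.edges, e ∈ G'.edgeSet := by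
        intro e
        refine Sym2.ind (fun u v he => ?_) e
        have hu : u ∈ t.support := t.fst_mem_support_of_mem_edges he
        have hv : v ∈ t.support := t.snd_mem_support_of_mem_edges he
        have hadjuv : G.Adj u v := t.adj_of_mem_edges he
        rw [SimpleGraph.mem_edgeSet]
        exact h6 u v hadjuv (fun hh => hp.2 (hh ▸ hu)) (fun hh => hp.2 (hh ▸ hv))
      have hKle : Kd G' ≤ t.length := by
        have h1 : Kd G' ≤ G'.dist q1 b := Nat.sInf_le ⟨q1, b, hpair, rfl⟩
        have h2 : G'.dist q1 b ≤ (t.transfer G' hedges).length := SimpleGraph.dist_le _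
        rw [SimpleGraph.Walk.length_transfer] at h2
        omega
      have hKlt : Kd G' < Kd G := by omega
      refine ⟨G', hslide, hconn', ?_⟩
      rw [hphi]
      exact Nat.add_lt_add_left hKlt _

end Main

/-- Every connected simple graph is slide-equivalent to an almost regular graph:
one in which any two vertex degrees differ by at most `1`. -/
theorem slide_equivalent_to_almost_regular {V : Type*} [Fintype V] (G : SimpleGraph V)
    (hc : G.Connected) :
    ∃ G' : SimpleGraph V, Relation.ReflTransGen EdgeSlide G G' ∧
      ∀ x y : V, (G'.neighborSet x).ncard ≤ (G'.neighborSet y).ncard + 1 := by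
  classical
  suffices h : ∀ (n : ℕ) (G : SimpleGraph V), G.Connected →
      Phi G * (Fintype.card V + 1) + Kd G = n →
      ∃ G' : SimpleGraph V, Relation.ReflTransGen EdgeSlide G G' ∧
        ∀ x y : V, (G'.neighborSet x).ncard ≤ (G'.neighborSet y).ncard + 1 by
    exact h _ G hc rfl
  intro n
  induction n using Nat.strong_induction_on with
  | _ n ih =>
    intro G hcG hn
    by_cases hbad : ∃ a b : V, dg G b + 2 ≤ dg G a
    · obtain ⟨G', hs, hc', hlt⟩ := step_lemma hcG hbad
      obtain ⟨G'', h1, h2⟩ := ih _ (by omega) G' hc' rfl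
      exact ⟨G'', Relation.ReflTransGen.head hs h1, h2⟩
    · push_neg at hbad
      refine ⟨G, Relation.ReflTransGen.refl, fun x y => ?_⟩
      have := hbad x y
      unfold dg at this
      omega
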